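/- Let ξ ∈ ℂ with Re ξ > 0 and Im ξ > 0, let Φ(x) = e^{iξ‖x‖}/(4π‖x‖), and let G be the matrix-valued function with components G_{jℓ}(x) = −Φ(x)δ_{jℓ} + (1/ξ²)∂ⱼ∂ₗΦ(x). Then each component G_{jℓ} is differentiable on ℝ³ \ {0}, and there exist positive real constants a, b, c, d, depending only on |ξ| (equivalently, a polynomial q of degree 4 with positive coefficients and vanishing constant term), such that for all x ∈ ℝ³ with x ≠ 0 and all 1 ≤ j, ℓ, m ≤ 3, |∂ₘG_{jℓ}(x)| ≤ q(1/‖x‖) = a/‖x‖ + b/‖x‖² + c/‖x‖³ + d/‖x‖⁴. -/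

import Mathlib

open Complex Real
open RealInnerProductSpace

/-- The outgoing fundamental solution of the Helmholtz equation in `ℝ³` with
complex wavenumber `ξ`: `Φ(x) = e^{iξ‖x‖}/(4π‖x‖)`. -/
noncomputable def Phi (ξ : ℂ) (x : EuclideanSpace ℝ (Fin 3)) : ℂ :=
  Complex.exp (Complex.I * ξ * (‖x‖ : ℂ)) / (4 * (Real.pi : ℂ) * (‖x‖ : ℂ))

/-- Partial derivative `∂ₘ f` of a function `f : ℝ³ → ℂ`. -/
noncomputable def pd (m : Fin 3) (f : EuclideanSpace ℝ (Fin 3) → ℂ)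
    (x : EuclideanSpace ℝ (Fin 3)) : ℂ :=
  fderiv ℝ f x (EuclideanSpace.single m 1)

/-- Component `(j,ℓ)` of the fundamental solution of the time-harmonic Maxwell
equations: `G_{jℓ}(x) = −Φ(x)δ_{jℓ} + (1/ξ²)∂ⱼ∂ₗΦ(x)`. -/
noncomputable def G (ξ : ℂ) (j l : Fin 3) (x : EuclideanSpace ℝ (Fin 3)) : ℂ :=
  -Phi ξ x * (if j = l then 1 else 0) + (1 / ξ ^ 2) * pd j (pd l (Phi ξ)) x

abbrev E3 := EuclideanSpace ℝ (Fin 3)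

lemma abs_coord_le (x : E3) (i : Fin 3) : |x i| ≤ ‖x‖ := by
  rw [EuclideanSpace.norm_eq, ← Real.sqrt_sq_eq_abs]
  apply Real.sqrt_le_sqrt
  have h : |x i| ^ 2 ≤ ∑ j, ‖x j‖ ^ 2 :=
    Finset.single_le_sum (f := fun j => ‖x j‖ ^ 2) (fun j _ => sq_nonneg _) (Finset.mem_univ i)
  simpa [sq_abs] using h

-- norm derivative
lemma hasFDerivAt_norm' {x : E3} (hx : x ≠ 0) :
    HasFDerivAt (fun y : E3 => ‖y‖) (‖x‖⁻¹ • innerSL ℝ x) x := by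
  have hin : HasFDerivAt (fun y : E3 => ⟪y, y⟫)
      ((fderivInnerCLM ℝ (x, x)).comp ((ContinuousLinearMap.id ℝ E3).prod (ContinuousLinearMap.id ℝ E3))) x :=
    (hasFDerivAt_id x).inner ℝ (hasFDerivAt_id x)
  have hpos : (0:ℝ) < ⟪x, x⟫ := by
    rw [real_inner_self_eq_norm_sq]
    have : ‖x‖ ≠ 0 := norm_ne_zero_iff.2 hx
    positivity
  have hs : HasDerivAt Real.sqrt (1 / (2 * Real.sqrt ⟪x, x⟫)) ⟪x, x⟫ :=
    Real.hasDerivAt_sqrt hpos.ne'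
  have hcomp := hs.comp_hasFDerivAt (f := fun y : E3 => ⟪y, y⟫) x hin
  have heq : (fun y : E3 => Real.sqrt ⟪y, y⟫) = fun y : E3 => ‖y‖ := by
    funext y; rw [real_inner_self_eq_norm_sq]; exact Real.sqrt_sq (norm_nonneg y)
  rw [show (Real.sqrt ∘ fun y : E3 => ⟪y, y⟫) = fun y : E3 => ‖y‖ from heq] at hcomp
  refine hcomp.congr_fderiv ?_
  ext v
  have hs2 : Real.sqrt ⟪x, x⟫ = ‖x‖ := by
    rw [real_inner_self_eq_norm_sq]; exact Real.sqrt_sq (norm_nonneg x)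
  simp only [ContinuousLinearMap.smul_apply, ContinuousLinearMap.coe_comp', Function.comp_apply,
    ContinuousLinearMap.prod_apply, ContinuousLinearMap.coe_id', id, fderivInnerCLM_apply,
    innerSL_apply_apply, hs2, smul_eq_mul]
  rw [real_inner_comm v x]
  have hnx : ‖x‖ ≠ 0 := norm_ne_zero_iff.2 hx
  field_simp
  ring

-- pd basic lemmas
lemma pd_congr {m : Fin 3} {f g : E3 → ℂ} {x : E3} (h : f =ᶠ[nhds x] g) :
    pd m f x = pd m g x := by
  unfold pd; rw [h.fderiv_eq]

lemma pd_add {m : Fin 3} {f g : E3 → ℂ} {x : E3} (hf : DifferentiableAt ℝ f x)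
    (hg : DifferentiableAt ℝ g x) :
    pd m (fun y => f y + g y) x = pd m f x + pd m g x := by
  unfold pd; rw [fderiv_fun_add hf hg]; simp

lemma pd_mul {m : Fin 3} {f g : E3 → ℂ} {x : E3} (hf : DifferentiableAt ℝ f x)
    (hg : DifferentiableAt ℝ g x) :
    pd m (fun y => f y * g y) x = pd m f x * g x + f x * pd m g x := by
  unfold pd; rw [fderiv_fun_mul hf hg]; simp [smul_eq_mul]; ring

-- coordinate function
noncomputable def co (i : Fin 3) : E3 → ℂ := fun y => (y i : ℂ)

lemma co_hasFDerivAt (i : Fin 3) (x : E3) :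
    HasFDerivAt (co i) ((Complex.ofRealCLM.comp (EuclideanSpace.proj i : E3 →L[ℝ] ℝ))) x := by
  exact (Complex.ofRealCLM.comp (EuclideanSpace.proj i : E3 →L[ℝ] ℝ)).hasFDerivAt

lemma co_diff (i : Fin 3) (x : E3) : DifferentiableAt ℝ (co i) x :=
  (co_hasFDerivAt i x).differentiableAt

lemma pd_co (i m : Fin 3) (x : E3) : pd m (co i) x = if m = i then 1 else 0 := by
  unfold pd
  rw [(co_hasFDerivAt i x).fderiv]
  simp [EuclideanSpace.single_apply, EuclideanSpace.proj]
  split <;> rename_i h <;> simp [h, eq_comm]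

-- monomials
noncomputable def evM : List (Fin 3) → E3 → ℂ
  | [], _ => 1
  | i :: L, x => co i x * evM L x

def derProd (m : Fin 3) : List (Fin 3) → List (List (Fin 3))
  | [] => []
  | i :: L => (if i = m then [L] else []) ++ (derProd m L).map (i :: ·)

noncomputable def sumM : List (List (Fin 3)) → E3 → ℂ
  | [], _ => 0
  | L :: Ls, x => evM L x + sumM Ls x

lemma evM_diff (L : List (Fin 3)) (x : E3) : DifferentiableAt ℝ (evM L) x := by
  induction L with
  | nil => exact differentiableAt_const 1
  | cons i L ih => exact (co_diff i x).mul ih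

lemma sumM_append (A B : List (List (Fin 3))) (x : E3) :
    sumM (A ++ B) x = sumM A x + sumM B x := by
  induction A with
  | nil => simp [sumM]
  | cons L A ih => simp [sumM, ih]; ring

lemma sumM_map_cons (i : Fin 3) (Ls : List (List (Fin 3))) (x : E3) :
    sumM (Ls.map (i :: ·)) x = co i x * sumM Ls x := by
  induction Ls with
  | nil => simp [sumM]
  | cons L Ls ih => simp [sumM, evM, ih]; ring

lemma pd_evM (L : List (Fin 3)) (m : Fin 3) (x : E3) :
    pd m (evM L) x = sumM (derProd m L) x := by
  induction L with
  | nil =>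
    show pd m (fun _ => 1) x = 0
    unfold pd; simp
  | cons i L ih =>
    have h : pd m (evM (i :: L)) x = pd m (fun y => co i y * evM L y) x := rfl
    rw [h, pd_mul (co_diff i x) (evM_diff L x), pd_co, ih]
    rw [show derProd m (i :: L) = (if i = m then [L] else []) ++ (derProd m L).map (i :: ·) from rfl]
    rw [sumM_append, sumM_map_cons]
    by_cases him : i = m
    · simp [him, sumM]
    · simp [him, Ne.symm him, sumM]

lemma derProd_length {m : Fin 3} {L : List (Fin 3)} :
    ∀ L' ∈ derProd m L, L'.length + 1 = L.length := by
  induction L with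
  | nil => simp [derProd]
  | cons i L ih =>
    intro L' hL'
    simp only [derProd, List.mem_append, List.mem_map] at hL'
    rcases hL' with h | ⟨L'', hL'', rfl⟩
    · split at h
      · simp at h; subst h; simp
      · simp at h
    · simp [ih L'' hL'']
    
lemma derProd_count {m : Fin 3} {L : List (Fin 3)} :
    (derProd m L).length ≤ L.length := by
  induction L with
  | nil => simp [derProd]
  | cons i L ih =>
    simp only [derProd, List.length_append, List.length_map, List.length_cons]
    split <;> simp <;> omega

-- the radial factor
noncomputable def Fk (ξ : ℂ) (c : ℂ) (k : ℕ) : ℝ → ℂ :=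
  fun s => c * Complex.exp (Complex.I * ξ * s) * ((s ^ (-(k : ℤ)) : ℝ) : ℂ)

lemma Fk_succ (ξ c : ℂ) (k : ℕ) {s : ℝ} (hs : s ≠ 0) :
    Fk ξ c (k + 1) s = Fk ξ c k s * (s : ℂ)⁻¹ := by
  unfold Fk
  have : (s : ℝ) ^ (-((k:ℤ) + 1)) = s ^ (-(k:ℤ)) * s⁻¹ := by
    rw [← zpow_neg_one, ← zpow_add₀ hs]; ring_nf
  push_cast [this]
  ring

lemma hasDerivAt_Fk (ξ c : ℂ) (k : ℕ) {s : ℝ} (hs : s ≠ 0) :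
    HasDerivAt (Fk ξ c k)
      (Fk ξ (Complex.I * ξ * c) k s + Fk ξ (-(k : ℂ) * c) (k + 1) s) s := by
  have h1 : HasDerivAt (fun u : ℝ => ((u : ℂ))) 1 s := by
    simpa using (hasDerivAt_id s).ofReal_comp
  have h2 : HasDerivAt (fun u : ℝ => Complex.I * ξ * u) (Complex.I * ξ) s := by
    simpa using h1.const_mul (Complex.I * ξ)
  have h3 := h2.cexp
  have h4 : HasDerivAt (fun u : ℝ => u ^ (-(k : ℤ))) (((-(k:ℤ)) : ℝ) * s ^ (-(k:ℤ) - 1)) s := by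
    exact_mod_cast hasDerivAt_zpow (-(k:ℤ)) s (Or.inl hs)
  have h5 : HasDerivAt (fun u : ℝ => ((u ^ (-(k : ℤ)) : ℝ) : ℂ))
      (((((-(k:ℤ)) : ℝ) * s ^ (-(k:ℤ) - 1) : ℝ)) : ℂ) s := by
    exact Complex.ofRealCLM.hasFDerivAt.comp_hasDerivAt s h4
  have h6 := (h3.const_mul c).mul h5
  refine h6.congr_deriv ?_
  unfold Fk
  have hz : (s : ℝ) ^ (-((k:ℤ) + 1)) = s ^ (-(k:ℤ)) * s⁻¹ := by
    rw [← zpow_neg_one, ← zpow_add₀ hs]; ring_nf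
  have hz2 : (s : ℝ) ^ (-(k:ℤ) - 1) = s ^ (-(k:ℤ)) * s⁻¹ := by
    rw [← zpow_neg_one, ← zpow_add₀ hs]; ring_nf
  push_cast [hz, hz2]
  ring

-- composition with the norm
lemma hasFDerivAt_Fk_norm (ξ c : ℂ) (k : ℕ) {x : E3} (hx : x ≠ 0) :
    HasFDerivAt (fun y : E3 => Fk ξ c k ‖y‖)
      ((ContinuousLinearMap.smulRight (1 : ℝ →L[ℝ] ℝ)
          (Fk ξ (Complex.I * ξ * c) k ‖x‖ + Fk ξ (-(k : ℂ) * c) (k + 1) ‖x‖)).comp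
        (‖x‖⁻¹ • innerSL ℝ x)) x := by
  have hs : ‖x‖ ≠ 0 := norm_ne_zero_iff.2 hx
  have hF := (hasDerivAt_Fk ξ c k hs).hasFDerivAt
  exact hF.comp x (hasFDerivAt_norm' hx)

lemma Fk_norm_diff (ξ c : ℂ) (k : ℕ) {x : E3} (hx : x ≠ 0) :
    DifferentiableAt ℝ (fun y : E3 => Fk ξ c k ‖y‖) x :=
  (hasFDerivAt_Fk_norm ξ c k hx).differentiableAt

lemma pd_Fk_norm (ξ c : ℂ) (k : ℕ) (m : Fin 3) {x : E3} (hx : x ≠ 0) :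
    pd m (fun y : E3 => Fk ξ c k ‖y‖) x =
      (Fk ξ (Complex.I * ξ * c) k ‖x‖ + Fk ξ (-(k : ℂ) * c) (k + 1) ‖x‖) *
        ((x m * ‖x‖⁻¹ : ℝ) : ℂ) := by
  unfold pd
  rw [(hasFDerivAt_Fk_norm ξ c k hx).fderiv]
  simp [EuclideanSpace.inner_single_right, real_smul, smul_eq_mul]
  ring

-- terms and term lists
abbrev Term := ℂ × List (Fin 3) × ℕ

noncomputable def evT (ξ : ℂ) (t : Term) : E3 → ℂ :=
  fun x => Fk ξ t.1 t.2.2 ‖x‖ * evM t.2.1 x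

noncomputable def pdT (ξ : ℂ) (m : Fin 3) (t : Term) : List Term :=
  (Complex.I * ξ * t.1, m :: t.2.1, t.2.2 + 1) ::
  (-(t.2.2 : ℂ) * t.1, m :: t.2.1, t.2.2 + 2) ::
  (derProd m t.2.1).map (fun L' => (t.1, L', t.2.2))

noncomputable def evL (ξ : ℂ) : List Term → E3 → ℂ
  | [], _ => 0
  | t :: ts, x => evT ξ t x + evL ξ ts x

noncomputable def pdL (ξ : ℂ) (m : Fin 3) : List Term → List Term
  | [] => []
  | t :: ts => pdT ξ m t ++ pdL ξ m ts

lemma evL_append (ξ : ℂ) (A B : List Term) (x : E3) :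
    evL ξ (A ++ B) x = evL ξ A x + evL ξ B x := by
  induction A with
  | nil => simp [evL]
  | cons t A ih => simp [evL, ih]; ring

lemma evT_diff (ξ : ℂ) (t : Term) {x : E3} (hx : x ≠ 0) :
    DifferentiableAt ℝ (evT ξ t) x :=
  (Fk_norm_diff ξ t.1 t.2.2 hx).mul (evM_diff t.2.1 x)

lemma evL_diff (ξ : ℂ) (ts : List Term) {x : E3} (hx : x ≠ 0) :
    DifferentiableAt ℝ (evL ξ ts) x := by
  induction ts with
  | nil => exact differentiableAt_const 0
  | cons t ts ih => exact (evT_diff ξ t hx).add ih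

lemma evL_map_derProd (ξ c : ℂ) (k : ℕ) (Ls : List (List (Fin 3))) (x : E3) :
    evL ξ (Ls.map (fun L' => (c, L', k))) x = Fk ξ c k ‖x‖ * sumM Ls x := by
  induction Ls with
  | nil => simp [evL, sumM]
  | cons L Ls ih => simp [evL, sumM, evT, ih]; ring

lemma pd_evT (ξ : ℂ) (c : ℂ) (L : List (Fin 3)) (k : ℕ) (m : Fin 3) {x : E3} (hx : x ≠ 0) :
    pd m (evT ξ (c, L, k)) x = evL ξ (pdT ξ m (c, L, k)) x := by
  have hs : ‖x‖ ≠ 0 := norm_ne_zero_iff.2 hx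
  have h : pd m (evT ξ (c, L, k)) x
      = pd m (fun y => Fk ξ c k ‖y‖ * evM L y) x := rfl
  rw [h, pd_mul (Fk_norm_diff ξ c k hx) (evM_diff L x), pd_Fk_norm ξ c k m hx, pd_evM]
  show _ = evL ξ ((Complex.I * ξ * c, m :: L, k + 1) :: (-(k : ℂ) * c, m :: L, k + 2) ::
      (derProd m L).map (fun L' => (c, L', k))) x
  rw [show evL ξ ((Complex.I * ξ * c, m :: L, k + 1) :: (-(k : ℂ) * c, m :: L, k + 2) ::
      (derProd m L).map (fun L' => (c, L', k))) x
    = evT ξ (Complex.I * ξ * c, m :: L, k + 1) x + evT ξ (-(k : ℂ) * c, m :: L, k + 2) x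
      + evL ξ ((derProd m L).map (fun L' => (c, L', k))) x from by simp [evL]; ring]
  rw [evL_map_derProd]
  show (Fk ξ (Complex.I * ξ * c) k ‖x‖ + Fk ξ (-(k : ℂ) * c) (k + 1) ‖x‖) *
        ((x m * ‖x‖⁻¹ : ℝ) : ℂ) * evM L x + Fk ξ c k ‖x‖ * sumM (derProd m L) x
      = Fk ξ (Complex.I * ξ * c) (k + 1) ‖x‖ * (co m x * evM L x)
        + Fk ξ (-(k : ℂ) * c) (k + 2) ‖x‖ * (co m x * evM L x)
        + Fk ξ c k ‖x‖ * sumM (derProd m L) x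
  rw [Fk_succ ξ (Complex.I * ξ * c) k hs, Fk_succ ξ (-(k : ℂ) * c) (k+1) hs]
  unfold co
  push_cast
  have hsc : (‖x‖ : ℂ) ≠ 0 := by exact_mod_cast hs
  field_simp

lemma pd_evL (ξ : ℂ) (ts : List Term) (m : Fin 3) {x : E3} (hx : x ≠ 0) :
    pd m (evL ξ ts) x = evL ξ (pdL ξ m ts) x := by
  induction ts with
  | nil => show pd m (fun _ => 0) x = 0; unfold pd; simp
  | cons t ts ih =>
    have h : pd m (evL ξ (t :: ts)) x = pd m (fun y => evT ξ t y + evL ξ ts y) x := rfl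
    rw [h, pd_add (evT_diff ξ t hx) (evL_diff ξ ts hx), ih,
      show pdL ξ m (t :: ts) = pdT ξ m t ++ pdL ξ m ts from rfl, evL_append]
    obtain ⟨c, L, k⟩ := t
    rw [pd_evT ξ c L k m hx]

-- bounds
lemma abs_Fk {ξ : ℂ} (him : 0 ≤ ξ.im) (c : ℂ) (k : ℕ) {s : ℝ} (hs : 0 < s) :
    ‖(Fk ξ c k s)‖ ≤ ‖c‖ * s ^ (-(k : ℤ)) := by
  unfold Fk
  rw [norm_mul, norm_mul]
  have h1 : ‖(Complex.exp (Complex.I * ξ * s))‖ ≤ 1 := by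
    rw [Complex.norm_exp]
    apply Real.exp_le_one_iff.2
    simp [Complex.mul_re, Complex.mul_im]
    nlinarith
  have h2 : ‖((s ^ (-(k : ℤ)) : ℝ) : ℂ)‖ = s ^ (-(k : ℤ)) := by
    rw [Complex.norm_real, Real.norm_eq_abs, abs_of_pos (zpow_pos hs _)]
  rw [h2]
  calc ‖c‖ * ‖(Complex.exp (Complex.I * ξ * s))‖ * s ^ (-(k : ℤ))
      ≤ ‖c‖ * 1 * s ^ (-(k : ℤ)) := by
        apply mul_le_mul_of_nonneg_right _ (le_of_lt (zpow_pos hs _))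
        exact mul_le_mul_of_nonneg_left h1 (norm_nonneg c)
    _ = ‖c‖ * s ^ (-(k : ℤ)) := by ring

lemma abs_evM (L : List (Fin 3)) (x : E3) :
    ‖(evM L x)‖ ≤ ‖x‖ ^ L.length := by
  induction L with
  | nil => simp [evM]
  | cons i L ih =>
    show ‖(co i x * evM L x)‖ ≤ ‖x‖ ^ (L.length + 1)
    rw [norm_mul, pow_succ, mul_comm (‖x‖ ^ L.length) ‖x‖]
    apply mul_le_mul _ ih (norm_nonneg _) (norm_nonneg x)
    unfold co
    rw [Complex.norm_real]
    exact abs_coord_le x i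

lemma abs_evT {ξ : ℂ} (him : 0 ≤ ξ.im) (c : ℂ) (L : List (Fin 3)) (k : ℕ) {x : E3}
    (hx : x ≠ 0) (h1 : L.length + 1 ≤ k) (h2 : k ≤ L.length + 4) :
    ‖(evT ξ (c, L, k) x)‖ ≤
      ‖c‖ * ((1/‖x‖) + (1/‖x‖)^2 + (1/‖x‖)^3 + (1/‖x‖)^4) := by
  have hs : (0:ℝ) < ‖x‖ := norm_pos_iff.2 hx
  have hb : ‖(evT ξ (c, L, k) x)‖
      ≤ (‖c‖ * ‖x‖ ^ (-(k:ℤ))) * ‖x‖ ^ L.length := by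
    rw [show evT ξ (c, L, k) x = Fk ξ c k ‖x‖ * evM L x from rfl, norm_mul]
    exact mul_le_mul (abs_Fk him c k hs) (abs_evM L x) (norm_nonneg _)
      (by positivity)
  refine hb.trans ?_
  rw [mul_assoc]
  apply mul_le_mul_of_nonneg_left _ (norm_nonneg c)
  obtain ⟨d, rfl⟩ : ∃ d, k = L.length + d := ⟨k - L.length, by omega⟩
  have hd1 : 1 ≤ d := by omega
  have hd2 : d ≤ 4 := by omega
  have key : ‖x‖ ^ (-((L.length + d : ℕ) : ℤ)) * ‖x‖ ^ L.length = (1/‖x‖) ^ d := by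
    rw [one_div, inv_pow, ← zpow_natCast ‖x‖ L.length, ← zpow_add₀ hs.ne',
      ← zpow_natCast ‖x‖ d, ← zpow_neg]
    congr 1
    push_cast
    ring
  rw [key]
  have hpos : (0:ℝ) < 1/‖x‖ := by positivity
  interval_cases d
  · nlinarith [pow_pos hpos 2, pow_pos hpos 3, pow_pos hpos 4]
  · nlinarith [pow_pos hpos 2, pow_pos hpos 3, pow_pos hpos 4]
  · nlinarith [pow_pos hpos 2, pow_pos hpos 3, pow_pos hpos 4]
  · nlinarith [pow_pos hpos 2, pow_pos hpos 3, pow_pos hpos 4]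

-- invariants and coefficient sums
def TInv (s : ℕ) (t : Term) : Prop :=
  t.2.1.length + 1 ≤ t.2.2 ∧ t.2.2 ≤ t.2.1.length + 1 + s ∧ t.2.1.length ≤ s

lemma Inv_pdT {ξ : ℂ} {m : Fin 3} {s : ℕ} {t : Term} (h : TInv s t) :
    ∀ t' ∈ pdT ξ m t, TInv (s + 1) t' := by
  obtain ⟨c, L, k⟩ := t
  obtain ⟨ha, hb, hc⟩ := h
  have ha' : L.length + 1 ≤ k := ha
  have hb' : k ≤ L.length + 1 + s := hb
  have hc' : L.length ≤ s := hc
  clear ha hb hc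
  intro t' ht'
  simp only [pdT, List.mem_cons, List.mem_map] at ht'
  rcases ht' with rfl | rfl | ⟨L', hL', rfl⟩
  · exact ⟨by simp; omega, by simp; omega, by simp; omega⟩
  · exact ⟨by simp; omega, by simp; omega, by simp; omega⟩
  · have := derProd_length L' hL'
    exact ⟨by simp; omega, by simp; omega, by simp; omega⟩

lemma Inv_pdL {ξ : ℂ} {m : Fin 3} {s : ℕ} {ts : List Term} (h : ∀ t ∈ ts, TInv s t) :
    ∀ t' ∈ pdL ξ m ts, TInv (s + 1) t' := by
  induction ts with
  | nil => simp [pdL]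
  | cons t ts ih =>
    intro t' ht'
    rw [show pdL ξ m (t :: ts) = pdT ξ m t ++ pdL ξ m ts from rfl, List.mem_append] at ht'
    rcases ht' with h1 | h1
    · exact Inv_pdT (h t (by simp)) t' h1
    · exact ih (fun u hu => h u (by simp [hu])) t' h1

noncomputable def CS : List Term → ℝ
  | [] => 0
  | t :: ts => ‖t.1‖ + CS ts

lemma CS_nonneg (ts : List Term) : 0 ≤ CS ts := by
  induction ts with
  | nil => simp [CS]
  | cons t ts ih => simp only [CS]; positivity

lemma CS_append (A B : List Term) : CS (A ++ B) = CS A + CS B := by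
  induction A with
  | nil => simp [CS]
  | cons t A ih => simp [CS, ih]; ring

lemma CS_map (c : ℂ) (k : ℕ) (Ls : List (List (Fin 3))) :
    CS (Ls.map (fun L' => (c, L', k))) = Ls.length * ‖c‖ := by
  induction Ls with
  | nil => simp [CS]
  | cons L Ls ih => simp [CS, ih]; ring

lemma CS_pdT {ξ : ℂ} {m : Fin 3} {s : ℕ} {t : Term} (h : TInv s t) :
    CS (pdT ξ m t) ≤ (‖ξ‖ + 3 * s + 1) * ‖t.1‖ := by
  obtain ⟨c, L, k⟩ := t
  obtain ⟨ha, hb, hc⟩ := h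
  show ‖(Complex.I * ξ * c)‖ + (‖(-(k : ℂ) * c)‖ +
    CS ((derProd m L).map (fun L' => (c, L', k)))) ≤ _
  rw [CS_map]
  have e1 : ‖(Complex.I * ξ * c)‖ = ‖ξ‖ * ‖c‖ := by
    rw [norm_mul, norm_mul, Complex.norm_I]; ring
  have e2 : ‖(-(k : ℂ) * c)‖ = k * ‖c‖ := by
    rw [norm_mul, norm_neg]
    congr 1
    rw [Complex.norm_natCast]
  rw [e1, e2]
  have h3 : ((derProd m L).length : ℝ) ≤ L.length := by exact_mod_cast derProd_count
  have h4 : (k : ℝ) ≤ L.length + 1 + s := by exact_mod_cast hb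
  have h5 : (L.length : ℝ) ≤ s := by exact_mod_cast hc
  have := norm_nonneg c
  nlinarith

lemma CS_pdL {ξ : ℂ} {m : Fin 3} {s : ℕ} {ts : List Term} (h : ∀ t ∈ ts, TInv s t) :
    CS (pdL ξ m ts) ≤ (‖ξ‖ + 3 * s + 1) * CS ts := by
  induction ts with
  | nil => simp [pdL, CS]
  | cons t ts ih =>
    rw [show pdL ξ m (t :: ts) = pdT ξ m t ++ pdL ξ m ts from rfl, CS_append,
      show CS (t :: ts) = ‖t.1‖ + CS ts from rfl, mul_add]
    exact add_le_add (CS_pdT (h t (by simp))) (ih (fun u hu => h u (by simp [hu])))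

lemma abs_evL {ξ : ℂ} (him : 0 ≤ ξ.im) {ts : List Term} {x : E3} (hx : x ≠ 0)
    (h : ∀ t ∈ ts, t.2.1.length + 1 ≤ t.2.2 ∧ t.2.2 ≤ t.2.1.length + 4) :
    ‖(evL ξ ts x)‖ ≤
      CS ts * ((1/‖x‖) + (1/‖x‖)^2 + (1/‖x‖)^3 + (1/‖x‖)^4) := by
  induction ts with
  | nil => simp [evL, CS]
  | cons t ts ih =>
    rw [show evL ξ (t :: ts) x = evT ξ t x + evL ξ ts x from rfl,
      show CS (t :: ts) = ‖t.1‖ + CS ts from rfl, add_mul]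
    refine (norm_add_le _ _).trans (add_le_add ?_ (ih (fun u hu => h u (by simp [hu]))))
    obtain ⟨c, L, k⟩ := t
    exact abs_evT him c L k hx (h (c, L, k) (by simp)).1 (h (c, L, k) (by simp)).2

-- scaling
noncomputable def smulL (a : ℂ) : List Term → List Term :=
  List.map (fun t => (a * t.1, t.2))

lemma evT_smul (ξ a c : ℂ) (L : List (Fin 3)) (k : ℕ) (x : E3) :
    evT ξ (a * c, L, k) x = a * evT ξ (c, L, k) x := by
  show Fk ξ (a * c) k ‖x‖ * evM L x = a * (Fk ξ c k ‖x‖ * evM L x)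
  unfold Fk; ring

lemma evL_smulL (ξ a : ℂ) (ts : List Term) (x : E3) :
    evL ξ (smulL a ts) x = a * evL ξ ts x := by
  induction ts with
  | nil => simp [smulL, evL]
  | cons t ts ih =>
    obtain ⟨c, L, k⟩ := t
    show evT ξ (a * c, L, k) x + evL ξ (smulL a ts) x = _
    rw [ih, evT_smul]
    show _ = a * (evT ξ (c, L, k) x + evL ξ ts x)
    ring

lemma CS_smulL (a : ℂ) (ts : List Term) :
    CS (smulL a ts) = ‖a‖ * CS ts := by
  induction ts with
  | nil => simp [smulL, CS]
  | cons t ts ih =>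
    show ‖(a * t.1)‖ + CS (smulL a ts) = _
    rw [ih, norm_mul]
    show _ = ‖a‖ * (‖t.1‖ + CS ts)
    ring

lemma TInv_smulL {a : ℂ} {s : ℕ} {ts : List Term} (h : ∀ t ∈ ts, TInv s t) :
    ∀ t ∈ smulL a ts, TInv s t := by
  intro t ht
  simp only [smulL, List.mem_map] at ht
  obtain ⟨u, hu, rfl⟩ := ht
  exact h u hu

-- the seed term
noncomputable def t0 : Term := ((4 * (Real.pi : ℂ))⁻¹, [], 1)

lemma Phi_eq (ξ : ℂ) : Phi ξ = evT ξ t0 := by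
  funext x
  show Phi ξ x = Fk ξ (4 * (Real.pi : ℂ))⁻¹ 1 ‖x‖ * 1
  unfold Phi Fk
  by_cases hx : ‖x‖ = 0
  · simp [hx]
  · have hπ : (Real.pi : ℂ) ≠ 0 := by exact_mod_cast Real.pi_ne_zero
    have hxc : (‖x‖ : ℂ) ≠ 0 := by exact_mod_cast hx
    have h1 : (‖x‖ : ℝ) ^ (-((1:ℕ):ℤ)) = ‖x‖⁻¹ := by norm_num
    rw [h1]
    push_cast
    field_simp

noncomputable def LG (ξ : ℂ) (j l : Fin 3) : List Term :=
  ((if j = l then (-1 : ℂ) else 0) * (4 * (Real.pi : ℂ))⁻¹, [], 1) ::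
    smulL (1 / ξ ^ 2) (pdL ξ j (pdL ξ l [t0]))

lemma G_eq (ξ : ℂ) (j l : Fin 3) {y : E3} (hy : y ≠ 0) :
    G ξ j l y = evL ξ (LG ξ j l) y := by
  have h1 : ∀ z : E3, z ≠ 0 → pd l (Phi ξ) z = evL ξ (pdL ξ l [t0]) z := by
    intro z hz
    have he : Phi ξ = evL ξ [t0] := by
      funext w
      rw [Phi_eq]
      show evT ξ t0 w = evT ξ t0 w + 0
      ring
    rw [he, pd_evL ξ [t0] l hz]
  have h2 : pd j (pd l (Phi ξ)) y = evL ξ (pdL ξ j (pdL ξ l [t0])) y := by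
    have hev : pd l (Phi ξ) =ᶠ[nhds y] evL ξ (pdL ξ l [t0]) := by
      filter_upwards [IsOpen.mem_nhds isOpen_compl_singleton hy] with z hz
      exact h1 z hz
    rw [pd_congr hev, pd_evL ξ _ j hy]
  show -Phi ξ y * (if j = l then 1 else 0) + (1 / ξ ^ 2) * pd j (pd l (Phi ξ)) y = _
  rw [h2]
  show _ = evT ξ ((if j = l then (-1 : ℂ) else 0) * (4 * (Real.pi : ℂ))⁻¹, [], 1) y
    + evL ξ (smulL (1 / ξ ^ 2) (pdL ξ j (pdL ξ l [t0]))) y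
  rw [evL_smulL, evT_smul]
  have hphi : Phi ξ y = evT ξ ((4 * (Real.pi : ℂ))⁻¹, [], 1) y := by rw [Phi_eq]; rfl
  rw [hphi]
  by_cases hjl : j = l <;> simp [hjl]

lemma G_diff (ξ : ℂ) (j l : Fin 3) {x : E3} (hx : x ≠ 0) :
    DifferentiableAt ℝ (G ξ j l) x := by
  have hev : G ξ j l =ᶠ[nhds x] evL ξ (LG ξ j l) := by
    filter_upwards [IsOpen.mem_nhds isOpen_compl_singleton hx] with z hz
    exact G_eq ξ j l hz
  exact (evL_diff ξ (LG ξ j l) hx).congr_of_eventuallyEq hev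

lemma pd_G (ξ : ℂ) (j l m : Fin 3) {x : E3} (hx : x ≠ 0) :
    pd m (G ξ j l) x = evL ξ (pdL ξ m (LG ξ j l)) x := by
  have hev : G ξ j l =ᶠ[nhds x] evL ξ (LG ξ j l) := by
    filter_upwards [IsOpen.mem_nhds isOpen_compl_singleton hx] with z hz
    exact G_eq ξ j l hz
  rw [pd_congr hev, pd_evL ξ _ m hx]

lemma TInv_LG (ξ : ℂ) (j l : Fin 3) : ∀ t ∈ LG ξ j l, TInv 2 t := by
  intro t ht
  have hInv0 : ∀ u ∈ [t0], TInv 0 u := by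
    intro u hu
    simp only [List.mem_singleton] at hu
    subst hu
    exact ⟨by simp [t0], by simp [t0], by simp [t0]⟩
  have hInv2 := Inv_pdL (ξ := ξ) (m := j) (Inv_pdL (ξ := ξ) (m := l) hInv0)
  rw [LG, List.mem_cons] at ht
  rcases ht with rfl | ht
  · exact ⟨by simp, by simp, by simp⟩
  · exact TInv_smulL hInv2 t ht

lemma CS_LG (ξ : ℂ) (j l : Fin 3) :
    CS (LG ξ j l) ≤ ‖(4 * (Real.pi : ℂ))⁻¹‖ *
      (1 + ‖(1 / ξ ^ 2)‖ * ((‖ξ‖ + 4) * (‖ξ‖ + 1))) := by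
  set c0r := ‖(4 * (Real.pi : ℂ))⁻¹‖ with hc0r
  have hc0 : 0 ≤ c0r := norm_nonneg _
  have hInv0 : ∀ u ∈ [t0], TInv 0 u := by
    intro u hu
    simp only [List.mem_singleton] at hu
    subst hu
    exact ⟨by simp [t0], by simp [t0], by simp [t0]⟩
  have hCS0 : CS [t0] = c0r := by
    show ‖(4 * (Real.pi : ℂ))⁻¹‖ + 0 = c0r
    rw [add_zero, hc0r]
  have h1 : CS (pdL ξ l [t0]) ≤ (‖ξ‖ + 1) * c0r := by
    have := CS_pdL (ξ := ξ) (m := l) hInv0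
    simpa [hCS0] using this
  have h2 : CS (pdL ξ j (pdL ξ l [t0])) ≤ (‖ξ‖ + 4) * ((‖ξ‖ + 1) * c0r) := by
    have hb := CS_pdL (ξ := ξ) (m := j) (Inv_pdL (ξ := ξ) (m := l) hInv0)
    have : (‖ξ‖ + 3 * 1 + 1) * CS (pdL ξ l [t0])
        ≤ (‖ξ‖ + 4) * ((‖ξ‖ + 1) * c0r) := by
      have hA : 0 ≤ ‖ξ‖ := norm_nonneg _
      have hnn := CS_nonneg (pdL ξ l [t0])
      nlinarith
    exact le_trans (by exact_mod_cast hb) this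
  show ‖((if j = l then (-1:ℂ) else 0) * (4 * (Real.pi : ℂ))⁻¹)‖
      + CS (smulL (1 / ξ ^ 2) (pdL ξ j (pdL ξ l [t0]))) ≤ _
  rw [CS_smulL]
  have hd : ‖((if j = l then (-1:ℂ) else 0) * (4 * (Real.pi : ℂ))⁻¹)‖ ≤ c0r := by
    by_cases hjl : j = l <;> simp [hjl, hc0r]
  have hq : 0 ≤ ‖(1 / ξ ^ 2)‖ := norm_nonneg _
  nlinarith

/-- Each component `G_{jℓ}` is differentiable away from the origin, and there is a
degree-4 polynomial `q(t) = a t + b t² + c t³ + d t⁴` with positive coefficients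
(depending only on `|ξ|`) and vanishing constant term such that
`|∂ₘG_{jℓ}(x)| ≤ q(1/‖x‖)` for all `x ≠ 0` and all `j, ℓ, m`. -/
theorem stmt_8 (ξ : ℂ) (hre : 0 < ξ.re) (him : 0 < ξ.im) :
    (∀ j l : Fin 3, ∀ x : EuclideanSpace ℝ (Fin 3), x ≠ 0 →
      DifferentiableAt ℝ (G ξ j l) x) ∧
    ∃ a b c d : ℝ, 0 < a ∧ 0 < b ∧ 0 < c ∧ 0 < d ∧
      ∀ x : EuclideanSpace ℝ (Fin 3), x ≠ 0 → ∀ j l m : Fin 3,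
        ‖(pd m (G ξ j l) x)‖ ≤
          a * (1 / ‖x‖) + b * (1 / ‖x‖) ^ 2 + c * (1 / ‖x‖) ^ 3 + d * (1 / ‖x‖) ^ 4 := by
  constructor
  · intro j l x hx
    exact G_diff ξ j l hx
  · set K0 : ℝ := (‖ξ‖ + 7) * (‖(4 * (Real.pi : ℂ))⁻¹‖ *
      (1 + ‖(1 / ξ ^ 2)‖ * ((‖ξ‖ + 4) * (‖ξ‖ + 1)))) with hK0
    have hK0nn : 0 ≤ K0 := by
      have := norm_nonneg ξ
      have := norm_nonneg (4 * (Real.pi : ℂ))⁻¹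
      have := norm_nonneg (1 / ξ ^ 2)
      positivity
    refine ⟨K0 + 1, K0 + 1, K0 + 1, K0 + 1, by linarith, by linarith, by linarith, by linarith,
      ?_⟩
    intro x hx j l m
    rw [pd_G ξ j l m hx]
    have hCS : CS (pdL ξ m (LG ξ j l)) ≤ K0 := by
      have h1 := CS_pdL (ξ := ξ) (m := m) (TInv_LG ξ j l)
      have h2 := CS_LG ξ j l
      have hA : 0 ≤ ‖ξ‖ := norm_nonneg _
      have hnn := CS_nonneg (LG ξ j l)
      push_cast at h1
      have h3 : CS (pdL ξ m (LG ξ j l)) ≤ (‖ξ‖ + 7) * CS (LG ξ j l) := by linarith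
      have h4 : (‖ξ‖ + 7) * CS (LG ξ j l) ≤ K0 := by
        rw [hK0]
        exact mul_le_mul_of_nonneg_left h2 (by linarith)
      linarith
    have hdeg : ∀ t ∈ pdL ξ m (LG ξ j l),
        t.2.1.length + 1 ≤ t.2.2 ∧ t.2.2 ≤ t.2.1.length + 4 := by
      intro t ht
      obtain ⟨h1, h2, h3⟩ := Inv_pdL (ξ := ξ) (m := m) (TInv_LG ξ j l) t ht
      exact ⟨h1, by omega⟩
    have hb := abs_evL him.le hx hdeg
    have hQ : 0 ≤ (1/‖x‖) + (1/‖x‖)^2 + (1/‖x‖)^3 + (1/‖x‖)^4 := by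
      have : (0:ℝ) < ‖x‖ := norm_pos_iff.2 hx
      positivity
    calc ‖(evL ξ (pdL ξ m (LG ξ j l)) x)‖
        ≤ CS (pdL ξ m (LG ξ j l)) * ((1/‖x‖) + (1/‖x‖)^2 + (1/‖x‖)^3 + (1/‖x‖)^4) := hb
      _ ≤ (K0 + 1) * ((1/‖x‖) + (1/‖x‖)^2 + (1/‖x‖)^3 + (1/‖x‖)^4) := by nlinarith
      _ = (K0+1) * (1/‖x‖) + (K0+1) * (1/‖x‖)^2 + (K0+1) * (1/‖x‖)^3 + (K0+1) * (1/‖x‖)^4 := by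
          ring
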